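/- Let X be an infinite, locally finite, connected, vertex-transitive graph containing a bi-infinite geodesic (x_n)_{n∈ℤ} with d(x_m,x_n) = |m − n|, and let 0 < α ≤ 1. If f : X → X_α is an (L,A)-quasi-isometric embedding (where X carries its own shortest-path metric and X_α carries its shortest-path metric), then for every vertex v of X, the distance in X_α from f(v) to the vertex set of X is at most L³ + 2L²A + A; in particular, sup_{v∈X} d(f(v), X) < ∞. -/

import Mathlib

/-- `f` is an `(L,A)`-quasi-isometric embedding with respect to the
distance functions `dX` and `dY`. -/
def IsQIE {X Y : Type*} (dX : X → X → ℝ) (dY : Y → Y → ℝ) (L A : ℝ) (f : X → Y) : Prop :=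
  ∀ a b : X, (1 / L) * dX a b - A ≤ dY (f a) (f b) ∧ dY (f a) (f b) ≤ L * dX a b + A

/-- `f` is coarsely surjective with respect to the distance function `dY`. -/
def IsCoarselySurj {X Y : Type*} (dY : Y → Y → ℝ) (f : X → Y) : Prop :=
  ∃ C : ℝ, 0 ≤ C ∧ ∀ y : Y, ∃ x : X, dY y (f x) ≤ C

/-- The shortest-path distance of a graph, as a real-valued distance function. -/
noncomputable def gdist {V : Type*} (G : SimpleGraph V) : V → V → ℝ :=
  fun u v => (G.dist u v : ℝ)

/-- The closed ball of radius `r` about `x` in the shortest-path metric. -/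
def gball {V : Type*} (G : SimpleGraph V) (x : V) (r : ℕ) : Set V :=
  {v | G.dist x v ≤ r}

/-- `g_α(n) = ⌈(log n)^α⌉`, the length of the segment attached at `x_{n²}`. -/
noncomputable def glen (α : ℝ) (n : ℕ) : ℤ := ⌈Real.log (n : ℝ) ^ α⌉

/-- The vertex set of `X_α`: vertices of `X` together with the new segment vertices
`k_n` for `n ≥ 1` and `1 ≤ k ≤ g_α(n)`. -/
def XaV (α : ℝ) (V : Type*) : Type _ :=
  V ⊕ {p : ℕ × ℕ // 1 ≤ p.1 ∧ 1 ≤ p.2 ∧ (p.2 : ℤ) ≤ glen α p.1}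

/-- The adjacency relation of `X_α`: the adjacencies of `X`, the vertex `1_n` is
attached to `0_n = x_{n²}`, and `k_n` is adjacent to `(k+1)_n`. -/
def xaRel (α : ℝ) {V : Type*} (G : SimpleGraph V) (x : ℤ → V) :
    XaV α V → XaV α V → Prop
  | Sum.inl u, Sum.inl v => G.Adj u v
  | Sum.inl u, Sum.inr p => p.1.2 = 1 ∧ u = x ((p.1.1 : ℤ) ^ 2)
  | Sum.inr p, Sum.inl u => p.1.2 = 1 ∧ u = x ((p.1.1 : ℤ) ^ 2)
  | Sum.inr p, Sum.inr q => p.1.1 = q.1.1 ∧ (p.1.2 + 1 = q.1.2 ∨ q.1.2 + 1 = p.1.2)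

/-- The graph `X_α`, obtained from `X` by attaching, for each `n ≥ 1`, a segment of
length `g_α(n)` at the vertex `x_{n²}` of the chosen bi-infinite geodesic. -/
def Xa (α : ℝ) {V : Type*} (G : SimpleGraph V) (x : ℤ → V) : SimpleGraph (XaV α V) :=
  SimpleGraph.fromRel (xaRel α G x)

open SimpleGraph

section Aux

variable {V : Type*} (α : ℝ) (G : SimpleGraph V) (x : ℤ → V)

lemma xa_adj_inl {u w : V} (h : G.Adj u w) :
    (Xa α G x).Adj (Sum.inl u) (Sum.inl w) :=
  ⟨fun hc => h.ne (Sum.inl.inj hc), Or.inl h⟩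

/-- The inclusion of `X` into `X_α` as a graph homomorphism. -/
def inlHom : G →g (Xa α G x) where
  toFun := Sum.inl
  map_rel' := fun h => xa_adj_inl α G x h

lemma seg_walk (n : ℕ) : ∀ (j : ℕ) (h : 1 ≤ n ∧ 1 ≤ j ∧ (j : ℤ) ≤ glen α n),
    ∃ p : (Xa α G x).Walk (Sum.inr ⟨(n, j), h⟩) (Sum.inl (x ((n : ℤ) ^ 2))),
      p.length = j := by
  intro j
  induction j with
  | zero => intro h; exact absurd h.2.1 (by norm_num)
  | succ j ih =>
    intro h
    rcases Nat.eq_zero_or_pos j with hj | hj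
    · subst hj
      have hadj : (Xa α G x).Adj (Sum.inr ⟨(n, 1), h⟩) (Sum.inl (x ((n : ℤ) ^ 2))) :=
        ⟨(by intro hc; cases hc), Or.inl ⟨rfl, rfl⟩⟩
      exact ⟨hadj.toWalk, rfl⟩
    · have h' : 1 ≤ n ∧ 1 ≤ j ∧ (j : ℤ) ≤ glen α n :=
        ⟨h.1, hj, le_trans (by exact_mod_cast Nat.le_succ j) h.2.2⟩
      obtain ⟨p, hp⟩ := ih h'
      have hadj : (Xa α G x).Adj (Sum.inr ⟨(n, j + 1), h⟩) (Sum.inr ⟨(n, j), h'⟩) := by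
        refine ⟨?_, Or.inl ⟨rfl, Or.inr rfl⟩⟩
        intro hc
        have h2 := congrArg (fun r : {p : ℕ × ℕ // 1 ≤ p.1 ∧ 1 ≤ p.2 ∧ (p.2 : ℤ) ≤ glen α p.1} => r.1.2) (Sum.inr.inj hc)
        dsimp only at h2
        omega
      exact ⟨SimpleGraph.Walk.cons hadj p, by show p.length + 1 = j + 1; omega⟩

lemma xa_connected (hc : G.Connected) : (Xa α G x).Connected := by
  have hne : Nonempty (XaV α V) := ⟨Sum.inl hc.nonempty.some⟩
  have hred : ∀ z : XaV α V, ∃ u : V, (Xa α G x).Reachable z (Sum.inl u) := by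
    intro z
    cases z with
    | inl u => exact ⟨u, Reachable.refl _⟩
    | inr q =>
      obtain ⟨⟨n, j⟩, hq⟩ := q
      obtain ⟨p, _⟩ := seg_walk α G x n j hq
      exact ⟨x ((n : ℤ) ^ 2), ⟨p⟩⟩
  refine Connected.mk ?_
  intro z z'
  obtain ⟨u, hu⟩ := hred z
  obtain ⟨u', hu'⟩ := hred z'
  exact hu.trans (((hc u u').map (inlHom α G x)).trans hu'.symm)

lemma seg_dist_le' (n j : ℕ) (h : 1 ≤ n ∧ 1 ≤ j ∧ (j : ℤ) ≤ glen α n) :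
    (Xa α G x).dist (Sum.inr ⟨(n, j), h⟩) (Sum.inl (x ((n : ℤ) ^ 2))) ≤ j := by
  obtain ⟨p, hp⟩ := seg_walk α G x n j h
  have := SimpleGraph.dist_le p
  omega

lemma abs_le_walk_length {W : Type*} {Γ : SimpleGraph W} (H : W → ℤ)
    (hH : ∀ a b, Γ.Adj a b → |H a - H b| ≤ 1) {a b : W} (p : Γ.Walk a b) :
    |H a - H b| ≤ p.length := by
  induction p with
  | nil => simp
  | @cons a c b hadj q ih =>
    calc |H a - H b| ≤ |H a - H c| + |H c - H b| := abs_sub_le _ _ _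
    _ ≤ 1 + q.length := add_le_add (hH _ _ hadj) ih
    _ = ((SimpleGraph.Walk.cons hadj q).length : ℤ) := by
        rw [SimpleGraph.Walk.length_cons]; push_cast; ring

lemma abs_le_dist {W : Type*} {Γ : SimpleGraph W} (hΓ : Γ.Connected) (H : W → ℤ)
    (hH : ∀ a b, Γ.Adj a b → |H a - H b| ≤ 1) (a b : W) :
    |H a - H b| ≤ (Γ.dist a b : ℤ) := by
  obtain ⟨p, hp⟩ := (hΓ a b).exists_walk_length_eq_dist
  simpa [hp] using abs_le_walk_length H hH p

/-- The potential function used for the lower bound on distances to points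
deep in the segment attached at `x_{n²}`. -/
noncomputable def Hn (n : ℕ) : XaV α V → ℤ
  | Sum.inl u => -((Xa α G x).dist (Sum.inl (x ((n : ℤ) ^ 2))) (Sum.inl u) : ℤ)
  | Sum.inr r => if r.1.1 = n then (r.1.2 : ℤ)
      else -((Xa α G x).dist (Sum.inl (x ((n : ℤ) ^ 2))) (Sum.inr r) : ℤ)

lemma xa_adj_dist_le_one {a b : XaV α V} (h : (Xa α G x).Adj a b) :
    (Xa α G x).dist a b ≤ 1 := by
  simpa using SimpleGraph.dist_le h.toWalk

lemma hn_lip (hc : G.Connected) (n : ℕ) :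
    ∀ a b, (Xa α G x).Adj a b → |Hn α G x n a - Hn α G x n b| ≤ 1 := by
  have hYc := xa_connected α G x hc
  have hgen : ∀ a b : XaV α V, (Xa α G x).Adj a b →
      |(-((Xa α G x).dist (Sum.inl (x ((n : ℤ) ^ 2))) a : ℤ)) -
        (-((Xa α G x).dist (Sum.inl (x ((n : ℤ) ^ 2))) b : ℤ))| ≤ 1 := by
    intro a b hab
    have h1 : (Xa α G x).dist a b ≤ 1 := xa_adj_dist_le_one α G x hab
    have h2 : (Xa α G x).dist b a ≤ 1 := xa_adj_dist_le_one α G x hab.symm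
    have t1 : (Xa α G x).dist (Sum.inl (x ((n : ℤ) ^ 2))) b ≤
        (Xa α G x).dist (Sum.inl (x ((n : ℤ) ^ 2))) a + (Xa α G x).dist a b :=
      hYc.dist_triangle
    have t2 : (Xa α G x).dist (Sum.inl (x ((n : ℤ) ^ 2))) a ≤
        (Xa α G x).dist (Sum.inl (x ((n : ℤ) ^ 2))) b + (Xa α G x).dist b a :=
      hYc.dist_triangle
    rw [abs_le]
    omega
  intro a b hab
  obtain ⟨hne, hrel⟩ := hab
  cases a with
  | inl u =>
    cases b with
    | inl w => exact hgen _ _ ⟨hne, hrel⟩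
    | inr r =>
      have hrel' : r.1.2 = 1 ∧ u = x ((r.1.1 : ℤ) ^ 2) := by
        rcases hrel with h | h <;> exact h
      by_cases hr : r.1.1 = n
      · have h1 : Hn α G x n (Sum.inl u) = 0 := by
          have hux : (Sum.inl u : XaV α V) = Sum.inl (x ((n : ℤ) ^ 2)) := by
            rw [hrel'.2, hr]
          simp [Hn, hux]; exact SimpleGraph.dist_self
        have h2 : Hn α G x n (Sum.inr r) = 1 := by
          simp [Hn, if_pos hr, hrel'.1]
        rw [h1, h2]; norm_num
      · have h1 : Hn α G x n (Sum.inl u) =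
            -((Xa α G x).dist (Sum.inl (x ((n : ℤ) ^ 2))) (Sum.inl u) : ℤ) := by
          simp [Hn]
        have h2 : Hn α G x n (Sum.inr r) =
            -((Xa α G x).dist (Sum.inl (x ((n : ℤ) ^ 2))) (Sum.inr r) : ℤ) := by
          simp [Hn, if_neg hr]
        rw [h1, h2]; exact hgen _ _ ⟨hne, hrel⟩
  | inr p =>
    cases b with
    | inl u =>
      have hrel' : p.1.2 = 1 ∧ u = x ((p.1.1 : ℤ) ^ 2) := by
        rcases hrel with h | h <;> exact h
      by_cases hp : p.1.1 = n
      · have h1 : Hn α G x n (Sum.inl u) = 0 := by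
          have hux : (Sum.inl u : XaV α V) = Sum.inl (x ((n : ℤ) ^ 2)) := by
            rw [hrel'.2, hp]
          simp [Hn, hux]; exact SimpleGraph.dist_self
        have h2 : Hn α G x n (Sum.inr p) = 1 := by
          simp [Hn, if_pos hp, hrel'.1]
        rw [h1, h2]; norm_num
      · have h1 : Hn α G x n (Sum.inl u) =
            -((Xa α G x).dist (Sum.inl (x ((n : ℤ) ^ 2))) (Sum.inl u) : ℤ) := by
          simp [Hn]
        have h2 : Hn α G x n (Sum.inr p) =
            -((Xa α G x).dist (Sum.inl (x ((n : ℤ) ^ 2))) (Sum.inr p) : ℤ) := by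
          simp [Hn, if_neg hp]
        rw [h1, h2]; exact hgen _ _ ⟨hne, hrel⟩
    | inr r =>
      have hrel' : p.1.1 = r.1.1 ∧ (p.1.2 + 1 = r.1.2 ∨ r.1.2 + 1 = p.1.2) := by
        rcases hrel with h | h
        · exact h
        · exact ⟨h.1.symm, h.2.symm⟩
      by_cases hp : p.1.1 = n
      · have hr : r.1.1 = n := hrel'.1.symm.trans hp
        have h1 : Hn α G x n (Sum.inr p) = (p.1.2 : ℤ) := by simp [Hn, if_pos hp]
        have h2 : Hn α G x n (Sum.inr r) = (r.1.2 : ℤ) := by simp [Hn, if_pos hr]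
        rw [h1, h2, abs_le]
        rcases hrel'.2 with h | h <;> omega
      · have hr : r.1.1 ≠ n := fun hh => hp (hrel'.1.trans hh)
        have h1 : Hn α G x n (Sum.inr p) =
            -((Xa α G x).dist (Sum.inl (x ((n : ℤ) ^ 2))) (Sum.inr p) : ℤ) := by
          simp [Hn, if_neg hp]
        have h2 : Hn α G x n (Sum.inr r) =
            -((Xa α G x).dist (Sum.inl (x ((n : ℤ) ^ 2))) (Sum.inr r) : ℤ) := by
          simp [Hn, if_neg hr]
        rw [h1, h2]; exact hgen _ _ ⟨hne, hrel⟩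

lemma seg_dist_lower (hc : G.Connected) (n j : ℕ)
    (h : 1 ≤ n ∧ 1 ≤ j ∧ (j : ℤ) ≤ glen α n) {z : XaV α V}
    (hz : ∀ r, z = Sum.inr r → r.1.1 ≠ n) :
    (j : ℤ) + ((Xa α G x).dist (Sum.inl (x ((n : ℤ) ^ 2))) z : ℤ) ≤
      ((Xa α G x).dist (Sum.inr ⟨(n, j), h⟩) z : ℤ) := by
  have hYc := xa_connected α G x hc
  have habs := abs_le_dist hYc (Hn α G x n) (hn_lip α G x hc n) (Sum.inr ⟨(n, j), h⟩) z
  have h1 : Hn α G x n (Sum.inr ⟨(n, j), h⟩) = (j : ℤ) := by simp [Hn]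
  have h2 : Hn α G x n z =
      -(((Xa α G x).dist (Sum.inl (x ((n : ℤ) ^ 2))) z : ℤ)) := by
    cases z with
    | inl u => simp [Hn]
    | inr r => simp [Hn, if_neg (hz r rfl)]
  rw [h1, h2] at habs
  have := le_trans (le_abs_self _) habs
  omega

lemma iso_dist (hc : G.Connected) (φ : G ≃g G) (a b : V) :
    G.dist (φ a) (φ b) = G.dist a b := by
  have key : ∀ (ψ : G ≃g G) (a b : V), G.dist (ψ a) (ψ b) ≤ G.dist a b := by
    intro ψ a b
    obtain ⟨p, hp⟩ := (hc a b).exists_walk_length_eq_dist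
    have := SimpleGraph.dist_le (p.map ψ.toHom)
    simpa [hp] using this
  refine le_antisymm (key φ a b) ?_
  have := key φ.symm (φ a) (φ b)
  simpa using this

end Aux

/-- if `X` is moreover vertex-transitive and `f : X → X_α` is an
`(L,A)`-quasi-isometric embedding, then every `f(v)` is within distance
`L³ + 2L²A + A` of the vertex set of `X ⊆ X_α`; in particular
`sup_{v ∈ X} d(f(v), X) < ∞`. -/
theorem stmt11 {V : Type*} (G : SimpleGraph V) [Infinite V]
    (hlf : ∀ v : V, (G.neighborSet v).Finite) (hconn : G.Connected)
    (htrans : ∀ u v : V, ∃ φ : G ≃g G, φ u = v)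
    (x : ℤ → V) (hgeo : ∀ m n : ℤ, G.dist (x m) (x n) = (m - n).natAbs)
    (α : ℝ) (hα : 0 < α) (hα1 : α ≤ 1)
    (L A : ℝ) (hL : 1 ≤ L) (hA : 0 ≤ A)
    (f : V → XaV α V) (hf : IsQIE (gdist G) (gdist (Xa α G x)) L A f) :
    (∀ v : V, ∃ w : V,
      gdist (Xa α G x) (f v) (Sum.inl w) ≤ L ^ 3 + 2 * L ^ 2 * A + A) ∧
    (∃ D : ℝ, ∀ v : V, ∃ w : V, gdist (Xa α G x) (f v) (Sum.inl w) ≤ D) := by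
  classical
  have hYc : (Xa α G x).Connected := xa_connected α G x hconn
  have hL0 : (0 : ℝ) < L := lt_of_lt_of_le one_pos hL
  have key : ∀ v : V, ∃ w : V,
      gdist (Xa α G x) (f v) (Sum.inl w) ≤ L ^ 3 + 2 * L ^ 2 * A + A := by
    intro v
    have hb0 : (0 : ℝ) ≤ L ^ 3 + 2 * L ^ 2 * A + A := by positivity
    cases hfv : f v with
    | inl w =>
      refine ⟨w, ?_⟩
      simp only [gdist, SimpleGraph.dist_self, Nat.cast_zero]
      have h0 : ((Xa α G x).dist (Sum.inl w) (Sum.inl w) : ℝ) = 0 :=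
        Nat.cast_eq_zero.mpr SimpleGraph.dist_self
      linarith
    | inr q =>
      obtain ⟨⟨n, k⟩, hq⟩ := q
      have hn1 : 1 ≤ n := hq.1
      have hk1 : 1 ≤ k := hq.2.1
      have hkg : (k : ℤ) ≤ glen α n := hq.2.2
      obtain ⟨φ, hφ⟩ := htrans (x 0) v
      set u : ℤ → V := fun m => φ (x m) with hu
      have hu0 : u 0 = v := hφ
      have hud : ∀ a b : ℤ, G.dist (u a) (u b) = (a - b).natAbs := by
        intro a b
        calc G.dist (φ (x a)) (φ (x b)) = G.dist (x a) (x b) := iso_dist G hconn φ _ _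
        _ = (a - b).natAbs := hgeo a b
      have hQ : ∀ a b : ℤ,
          (1 / L) * (((a - b).natAbs : ℕ) : ℝ) - A ≤
            ((Xa α G x).dist (f (u a)) (f (u b)) : ℝ) ∧
          ((Xa α G x).dist (f (u a)) (f (u b)) : ℝ) ≤ L * (((a - b).natAbs : ℕ) : ℝ) + A := by
        intro a b
        have h := hf (u a) (u b)
        simp only [gdist] at h
        rw [hud a b] at h
        exact h
      -- one-sided exit lemma
      have side : ∀ ε : ℤ, ε.natAbs = 1 →
          ∃ i : ℕ, 1 ≤ i ∧ (∀ r, f (u (ε * (i : ℤ))) = Sum.inr r → r.1.1 ≠ n) ∧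
            ((k : ℝ) + ((Xa α G x).dist (Sum.inl (x ((n : ℤ) ^ 2))) (f (u (ε * (i : ℤ)))) : ℝ)
              ≤ L * i + A) ∧
            (((Xa α G x).dist (Sum.inl (x ((n : ℤ) ^ 2))) (f (u (ε * (i : ℤ)))) : ℝ)
              ≤ L + A - 1) := by
        intro ε hε
        have hε' : ε = 1 ∨ ε = -1 := by omega
        set gN : ℕ := (glen α n).toNat with hgN
        have hkgN : k ≤ gN := by omega
        have honUB : ∀ z : XaV α V, (∃ r, z = Sum.inr r ∧ r.1.1 = n) →
            (Xa α G x).dist (Sum.inl (x ((n : ℤ) ^ 2))) z ≤ gN := by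
          rintro z ⟨⟨⟨n', j'⟩, hr⟩, rfl, hn'⟩
          have hn'' : n' = n := hn'
          subst hn''
          have h1 := seg_dist_le' α G x n' j' hr
          have h2 : j' ≤ gN := by
            have h3 : (j' : ℤ) ≤ glen α n' := hr.2.2
            omega
          exact (SimpleGraph.dist_comm).trans_le (le_trans h1 h2)
        have hdvk : (Xa α G x).dist (f (u 0)) (Sum.inl (x ((n : ℤ) ^ 2))) ≤ k := by
          rw [hu0, hfv]
          exact seg_dist_le' α G x n k hq
        have hex : ∃ m : ℕ, ∀ r, f (u (ε * ((m : ℤ) + 1))) = Sum.inr r → r.1.1 ≠ n := by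
          by_contra hno
          push_neg at hno
          set m : ℕ := ⌈L * (2 * (gN : ℝ) + A)⌉₊ with hm
          obtain ⟨r, hr1, hr2⟩ := hno m
          have hup : ((Xa α G x).dist (f (u 0)) (f (u (ε * ((m : ℤ) + 1)))) : ℝ)
              ≤ 2 * (gN : ℝ) := by
            have t : (Xa α G x).dist (f (u 0)) (f (u (ε * ((m : ℤ) + 1)))) ≤
                (Xa α G x).dist (f (u 0)) (Sum.inl (x ((n : ℤ) ^ 2))) +
                (Xa α G x).dist (Sum.inl (x ((n : ℤ) ^ 2))) (f (u (ε * ((m : ℤ) + 1)))) :=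
              hYc.dist_triangle
            have d2 := honUB _ ⟨r, hr1, hr2⟩
            have : (Xa α G x).dist (f (u 0)) (f (u (ε * ((m : ℤ) + 1)))) ≤ 2 * gN := by omega
            exact_mod_cast this
          have hlow := (hQ 0 (ε * ((m : ℤ) + 1))).1
          have hnab : (0 - ε * ((m : ℤ) + 1)).natAbs = m + 1 := by
            rcases hε' with h | h <;> subst h <;> omega
          rw [hnab] at hlow
          have h9 : (1 / L) * ((m : ℝ) + 1) ≤ 2 * (gN : ℝ) + A := by
            push_cast at hlow
            linarith
          have h10 : ((m : ℝ) + 1) ≤ L * (2 * (gN : ℝ) + A) := by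
            calc ((m : ℝ) + 1) = L * ((1 / L) * ((m : ℝ) + 1)) := by field_simp
            _ ≤ L * (2 * (gN : ℝ) + A) := mul_le_mul_of_nonneg_left h9 hL0.le
          have h11 : L * (2 * (gN : ℝ) + A) ≤ (m : ℝ) := Nat.le_ceil _
          linarith
        have main : ∀ i : ℕ, 1 ≤ i →
            (∀ r, f (u (ε * (i : ℤ))) = Sum.inr r → r.1.1 ≠ n) →
            (∃ r, f (u (ε * ((i : ℤ) - 1))) = Sum.inr r ∧ r.1.1 = n) →
            ((k : ℝ) + ((Xa α G x).dist (Sum.inl (x ((n : ℤ) ^ 2))) (f (u (ε * (i : ℤ)))) : ℝ)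
              ≤ L * i + A) ∧
            (((Xa α G x).dist (Sum.inl (x ((n : ℤ) ^ 2))) (f (u (ε * (i : ℤ)))) : ℝ)
              ≤ L + A - 1) := by
          intro i hi1 hioff hpred
          obtain ⟨r, hrEq, hrn⟩ := hpred
          obtain ⟨⟨n', δ⟩, hrP⟩ := r
          have hn'' : n' = n := hrn
          subst hn''
          have hδ1 : 1 ≤ δ := hrP.2.1
          have hlowδ := seg_dist_lower α G x hconn n' δ hrP (z := f (u (ε * (i : ℤ)))) hioff
          have hupδ : ((Xa α G x).dist (f (u (ε * ((i : ℤ) - 1)))) (f (u (ε * (i : ℤ)))) : ℝ)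
              ≤ L + A := by
            have h5 := (hQ (ε * ((i : ℤ) - 1)) (ε * (i : ℤ))).2
            have h6 : (ε * ((i : ℤ) - 1) - ε * (i : ℤ)).natAbs = 1 := by
              rcases hε' with h | h <;> subst h <;> omega
            rw [h6] at h5
            push_cast at h5
            linarith
          have hδz : (δ : ℝ) +
              ((Xa α G x).dist (Sum.inl (x ((n' : ℤ) ^ 2))) (f (u (ε * (i : ℤ)))) : ℝ)
              ≤ L + A := by
            rw [← hrEq] at hlowδ
            have h7 : (δ : ℝ) +
                ((Xa α G x).dist (Sum.inl (x ((n' : ℤ) ^ 2))) (f (u (ε * (i : ℤ)))) : ℝ) ≤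
                ((Xa α G x).dist (f (u (ε * ((i : ℤ) - 1)))) (f (u (ε * (i : ℤ)))) : ℝ) := by
              exact_mod_cast hlowδ
            linarith
          have hc1 : ((Xa α G x).dist (Sum.inl (x ((n' : ℤ) ^ 2))) (f (u (ε * (i : ℤ)))) : ℝ)
              ≤ L + A - 1 := by
            have hδR : (1 : ℝ) ≤ (δ : ℝ) := by exact_mod_cast hδ1
            linarith
          have hlowk := seg_dist_lower α G x hconn n' k hq (z := f (u (ε * (i : ℤ)))) hioff
          have hupk : ((Xa α G x).dist (f (u 0)) (f (u (ε * (i : ℤ)))) : ℝ) ≤ L * i + A := by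
            have h5 := (hQ 0 (ε * (i : ℤ))).2
            have h6 : (0 - ε * (i : ℤ)).natAbs = i := by
              rcases hε' with h | h <;> subst h <;> omega
            rw [h6] at h5
            exact h5
          have hk2 : (k : ℝ) +
              ((Xa α G x).dist (Sum.inl (x ((n' : ℤ) ^ 2))) (f (u (ε * (i : ℤ)))) : ℝ)
              ≤ L * i + A := by
            have h8 : f (u 0) = Sum.inr ⟨(n', k), hq⟩ := by rw [hu0, hfv]
            rw [h8] at hupk
            have h7 : (k : ℝ) +
                ((Xa α G x).dist (Sum.inl (x ((n' : ℤ) ^ 2))) (f (u (ε * (i : ℤ)))) : ℝ) ≤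
                ((Xa α G x).dist (Sum.inr ⟨(n', k), hq⟩) (f (u (ε * (i : ℤ)))) : ℝ) := by
              exact_mod_cast hlowk
            linarith
          exact ⟨hk2, hc1⟩
        have hc2 : ((Nat.find hex + 1 : ℕ) : ℤ) = (Nat.find hex : ℤ) + 1 := by
          push_cast; ring
        have hioff : ∀ r, f (u (ε * ((Nat.find hex + 1 : ℕ) : ℤ))) = Sum.inr r →
            r.1.1 ≠ n := by
          rw [hc2]; exact Nat.find_spec hex
        have hpred : ∃ r, f (u (ε * (((Nat.find hex + 1 : ℕ) : ℤ) - 1))) = Sum.inr r ∧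
            r.1.1 = n := by
          rw [hc2]
          rcases Nat.eq_zero_or_pos (Nat.find hex) with h0 | h0
          · refine ⟨⟨(n, k), hq⟩, ?_, rfl⟩
            have hz : ε * ((Nat.find hex : ℤ) + 1 - 1) = 0 := by rw [h0]; simp
            rw [hz, hu0, hfv]
          · have hmin := Nat.find_min hex (m := Nat.find hex - 1) (by omega)
            push_neg at hmin
            obtain ⟨r, hr1, hr2⟩ := hmin
            refine ⟨r, ?_, hr2⟩
            have hcast3 : ((Nat.find hex - 1 : ℕ) : ℤ) = (Nat.find hex : ℤ) - 1 := by omega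
            have hidx : ε * ((Nat.find hex : ℤ) + 1 - 1) =
                ε * (((Nat.find hex - 1 : ℕ) : ℤ) + 1) := by rw [hcast3]; ring
            rw [hidx, hr1]
        obtain ⟨hk2, hc1⟩ := main (Nat.find hex + 1) (by omega) hioff hpred
        exact ⟨Nat.find hex + 1, by omega, hioff, hk2, hc1⟩
      obtain ⟨i, hi1, hioff, hik, hic⟩ := side 1 rfl
      obtain ⟨j, hj1, hjoff, hjk, hjc⟩ := side (-1) (by decide)
      have hcross := (hQ (1 * (i : ℤ)) ((-1) * (j : ℤ))).1
      have h6 : (1 * (i : ℤ) - (-1) * (j : ℤ)).natAbs = i + j := by omega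
      rw [h6] at hcross
      have htri : ((Xa α G x).dist (f (u (1 * (i : ℤ)))) (f (u ((-1) * (j : ℤ)))) : ℝ) ≤
          ((Xa α G x).dist (Sum.inl (x ((n : ℤ) ^ 2))) (f (u (1 * (i : ℤ)))) : ℝ) +
          ((Xa α G x).dist (Sum.inl (x ((n : ℤ) ^ 2))) (f (u ((-1) * (j : ℤ)))) : ℝ) := by
        have t : (Xa α G x).dist (f (u (1 * (i : ℤ)))) (f (u ((-1) * (j : ℤ)))) ≤
            (Xa α G x).dist (f (u (1 * (i : ℤ)))) (Sum.inl (x ((n : ℤ) ^ 2))) +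
            (Xa α G x).dist (Sum.inl (x ((n : ℤ) ^ 2))) (f (u ((-1) * (j : ℤ)))) :=
          hYc.dist_triangle
        rw [SimpleGraph.dist_comm (u := f (u (1 * (i : ℤ))))
          (v := Sum.inl (x ((n : ℤ) ^ 2)))] at t
        have tR := (Nat.cast_le (α := ℝ)).mpr t
        rw [Nat.cast_add] at tR
        exact tR
      have hij : ((i : ℝ) + j) ≤ L * (2 * L + 3 * A - 2) := by
        have h9 : (1 / L) * ((i : ℝ) + j) - A ≤ (L + A - 1) + (L + A - 1) := by
          have h10 := le_trans hcross htri
          push_cast at h10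
          linarith [hic, hjc]
        have h11 : (1 / L) * ((i : ℝ) + j) ≤ 2 * L + 3 * A - 2 := by linarith
        calc ((i : ℝ) + j) = L * ((1 / L) * ((i : ℝ) + j)) := by field_simp
        _ ≤ L * (2 * L + 3 * A - 2) := mul_le_mul_of_nonneg_left h11 hL0.le
      have hksum : 2 * (k : ℝ) ≤ L * ((i : ℝ) + j) + 2 * A := by
        have d1 : (0 : ℝ) ≤
            ((Xa α G x).dist (Sum.inl (x ((n : ℤ) ^ 2))) (f (u (1 * (i : ℤ)))) : ℝ) := by
          positivity
        have d2 : (0 : ℝ) ≤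
            ((Xa α G x).dist (Sum.inl (x ((n : ℤ) ^ 2))) (f (u ((-1) * (j : ℤ)))) : ℝ) := by
          positivity
        linarith [hik, hjk, d1, d2]
      have hkfin : (k : ℝ) ≤ L ^ 3 + 2 * L ^ 2 * A + A := by
        have h12 : L * ((i : ℝ) + j) ≤ L * (L * (2 * L + 3 * A - 2)) :=
          mul_le_mul_of_nonneg_left hij hL0.le
        have h13 : L * (L * (2 * L + 3 * A - 2)) = 2 * L ^ 3 + 3 * L ^ 2 * A - 2 * L ^ 2 := by
          ring
        have hLA : (0 : ℝ) ≤ L ^ 2 * A := by positivity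
        have hL2 : (0 : ℝ) ≤ L ^ 2 := by positivity
        linarith [hksum, h12, hLA, hL2, h13]
      refine ⟨x ((n : ℤ) ^ 2), ?_⟩
      have hd := seg_dist_le' α G x n k hq
      have hdr : gdist (Xa α G x) (Sum.inr ⟨(n, k), hq⟩) (Sum.inl (x ((n : ℤ) ^ 2)))
          ≤ (k : ℝ) := by
        simp only [gdist]
        exact_mod_cast hd
      linarith
  exact ⟨key, ⟨L ^ 3 + 2 * L ^ 2 * A + A, key⟩⟩
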